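/- Let S be a numerical semigroup and E a relative ideal of S, with normalization Ẽ = E + (f(S) − f(E)). Then f(S) + 1 − g(S) ≤ g(Ẽ) + m(Ẽ), and equality holds if and only if E is a canonical ideal of S, i.e. Ẽ = K(S). -/

import Mathlib

open Set

/-- A numerical semigroup: an additive submonoid of ℕ (viewed inside ℤ)
with finite complement in ℕ. -/
def IsNumericalSemigroup (S : Set ℤ) : Prop :=
  0 ∈ S ∧ (∀ x ∈ S, ∀ y ∈ S, x + y ∈ S) ∧ (∀ x ∈ S, 0 ≤ x) ∧
    ({z : ℤ | 0 ≤ z} \ S).Finite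

/-- The Frobenius number of a set `X ⊆ ℤ`: the largest integer not in `X`. -/
noncomputable def frobNum (X : Set ℤ) : ℤ := sSup {z : ℤ | z ∉ X}

/-- The genus of a numerical semigroup: the number of gaps. -/
noncomputable def genus (S : Set ℤ) : ℕ := ({z : ℤ | 0 ≤ z} \ S).ncard

/-- `E` is an ideal of `S`: a nonempty subset of `S` closed under adding elements of `S`. -/
def IsIdealOf (S E : Set ℤ) : Prop :=
  E.Nonempty ∧ E ⊆ S ∧ ∀ e ∈ E, ∀ s ∈ S, e + s ∈ E

/-- `E` is a relative ideal of `S`. -/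
def IsRelIdealOf (S E : Set ℤ) : Prop :=
  E.Nonempty ∧ (∀ e ∈ E, ∀ s ∈ S, e + s ∈ E) ∧ ∃ s ∈ S, ∀ e ∈ E, s + e ∈ S

/-- The difference of two subsets of ℤ: `F − G = {z : z + G ⊆ F}`. -/
def setSub (F G : Set ℤ) : Set ℤ := {z : ℤ | ∀ g ∈ G, z + g ∈ F}

/-- The standard canonical ideal `K(S) = {x : f(S) − x ∉ S}`. -/
def stdCanonical (S : Set ℤ) : Set ℤ := {x : ℤ | frobNum S - x ∉ S}

/-- The maximal ideal `M(S) = S ∖ {0}`. -/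
def maxIdeal (S : Set ℤ) : Set ℤ := S \ {0}

/-- The type of a numerical semigroup: `t(S) = |(M−M) ∖ S|`. -/
noncomputable def typeNS (S : Set ℤ) : ℕ :=
  ((setSub (maxIdeal S) (maxIdeal S)) \ S).ncard

/-- The numerical duplication `S ⋈^b E = 2·S ∪ (2·E + b)`. -/
def dup (S E : Set ℤ) (b : ℤ) : Set ℤ :=
  (fun x => 2 * x) '' S ∪ (fun x => 2 * x + b) '' E

/-- The minimum of a (relative) ideal. -/
noncomputable def minE (E : Set ℤ) : ℤ := sInf E

/-- The genus of a relative ideal: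
`g(E) = |{x ∈ ℤ∖E : m(E) ≤ x ≤ f(E)}|`. -/
noncomputable def idealGenus (E : Set ℤ) : ℕ :=
  {x : ℤ | x ∉ E ∧ minE E ≤ x ∧ x ≤ frobNum E}.ncard

/-- The normalization `Ẽ = E + (f(S) − f(E))` of a (relative) ideal `E` of `S`. -/
def tilde (S E : Set ℤ) : Set ℤ := (fun e => e + (frobNum S - frobNum E)) '' E

/-- `S` is symmetric: `z ∈ S ↔ f(S) − z ∉ S`. -/
def IsSymmetric (S : Set ℤ) : Prop := ∀ z : ℤ, z ∈ S ↔ frobNum S - z ∉ S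

/-- `S` is almost symmetric: `K(S) + M(S) ⊆ M(S)`. -/
def IsAlmostSymmetric (S : Set ℤ) : Prop :=
  ∀ k ∈ stdCanonical S, ∀ m ∈ maxIdeal S, k + m ∈ maxIdeal S

/-- `f(S) + 1 - g(S) ≤ g(Ẽ) + m(Ẽ)`, with equality iff `E` is a canonical
ideal of `S` (i.e. `Ẽ = K(S)`). -/
theorem genus_min_inequality_canonical
    (S E : Set ℤ)
    (hS : IsNumericalSemigroup S) (hE : IsRelIdealOf S E) :
    frobNum S + 1 - (genus S : ℤ) ≤ (idealGenus (tilde S E) : ℤ) + minE (tilde S E) ∧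
      (frobNum S + 1 - (genus S : ℤ) = (idealGenus (tilde S E) : ℤ) + minE (tilde S E) ↔
        tilde S E = stdCanonical S) := by
  obtain ⟨h0S, haddS, hposS, hfinS⟩ := hS
  obtain ⟨⟨e0, he0⟩, hEadd, s0, hs0S, hs0E⟩ := hE
  -- S complement facts
  obtain ⟨N, hN⟩ := hfinS.bddAbove
  have hbdS : BddAbove {z : ℤ | z ∉ S} := by
    refine ⟨max N 0, fun z hz => ?_⟩
    rcases le_or_gt 0 z with h | h
    · exact le_max_of_le_left (hN ⟨h, hz⟩)
    · exact le_max_of_le_right h.le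
  have hneS : {z : ℤ | z ∉ S}.Nonempty :=
    ⟨-1, fun h => absurd (hposS _ h) (by norm_num)⟩
  have hfS : frobNum S ∉ S := Int.csSup_mem hneS hbdS
  set f := frobNum S with hfdef
  have hgtS : ∀ z : ℤ, f < z → z ∈ S := by
    intro z hz; by_contra h; exact absurd (le_csSup hbdS h) (not_le.2 hz)
  -- E facts
  have hbdbE : BddBelow E := by
    refine ⟨-s0, fun e he => ?_⟩
    have := hposS _ (hs0E e he); linarith
  have hmE : sInf E ∈ E := Int.csInf_mem ⟨e0, he0⟩ hbdbE
  have hmEle : ∀ e ∈ E, sInf E ≤ e := fun e he => csInf_le hbdbE he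
  have hneE : {z : ℤ | z ∉ E}.Nonempty := by
    refine ⟨sInf E - 1, fun h => ?_⟩
    have := hmEle _ h; omega
  have hbdE : BddAbove {z : ℤ | z ∉ E} := by
    refine ⟨e0 + f, fun z hz => ?_⟩
    by_contra h
    push_neg at h
    have := hEadd e0 he0 (z - e0) (hgtS _ (by omega))
    simp only [add_sub_cancel] at this
    exact hz this
  have hfE : frobNum E ∉ E := Int.csSup_mem hneE hbdE
  have hgtE : ∀ z : ℤ, frobNum E < z → z ∈ E := by
    intro z hz; by_contra h; exact absurd (le_csSup hbdE h) (not_le.2 hz)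
  set c := f - frobNum E with hcdef
  set T := tilde S E with hTdef
  have hTmem : ∀ x : ℤ, x ∈ T ↔ x - c ∈ E := by
    intro x
    constructor
    · rintro ⟨e, he, rfl⟩; simpa [hcdef, hfdef] using he
    · intro h; exact ⟨x - c, h, by ring⟩
  -- frobNum T = f
  have hfT : frobNum T = f := by
    apply IsGreatest.csSup_eq
    constructor
    · show f ∉ T
      rw [hTmem]
      have : f - c = frobNum E := by omega
      rw [this]; exact hfE
    · intro z hz
      by_contra h
      push_neg at h
      exact hz ((hTmem z).2 (hgtE _ (by omega)))
  -- minE T = sInf E + c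
  have hmT : minE T = sInf E + c := by
    apply IsLeast.csInf_eq
    constructor
    · exact (hTmem _).2 (by simpa using hmE)
    · intro t ht
      have := hmEle _ ((hTmem t).1 ht); omega
  set m := sInf E + c with hmdef
  -- T closed under adding S
  have hTadd : ∀ x ∈ T, ∀ s ∈ S, x + s ∈ T := by
    intro x hx s hs
    rw [hTmem] at hx ⊢
    have := hEadd _ hx s hs
    have h2 : x + s - c = x - c + s := by ring
    rwa [h2]
  -- all z > f are in T
  have hgtT : ∀ z : ℤ, f < z → z ∈ T := by
    intro z hz; exact (hTmem z).2 (hgtE _ (by omega))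
  have hfnT : f ∉ T := by
    rw [hTmem]
    have : f - c = frobNum E := by omega
    rw [this]; exact hfE
  -- m ≤ f + 1
  have hmf : m ≤ f + 1 := by
    by_contra h
    push_neg at h
    have : m - 1 ∈ T := hgtT _ (by omega)
    have := hmEle _ ((hTmem _).1 this)
    omega
  -- T ⊆ K
  have hTK : T ⊆ stdCanonical S := by
    intro x hx
    show f - x ∉ S
    intro hfx
    have : x + (f - x) ∈ T := hTadd x hx _ hfx
    simp only [add_sub_cancel] at this
    exact hfnT this
  -- K above f
  have hgtK : ∀ z : ℤ, f < z → z ∈ stdCanonical S := by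
    intro z hz hs
    have := hposS _ hs; omega
  -- K ∩ Iic f = image of gaps
  set G := {z : ℤ | 0 ≤ z} \ S with hGdef
  have hKI : stdCanonical S ∩ Iic f = (fun z => f - z) '' G := by
    ext x
    simp only [mem_inter_iff, mem_Iic, mem_image, hGdef, mem_diff, mem_setOf_eq]
    constructor
    · rintro ⟨hk, hx⟩
      exact ⟨f - x, ⟨by omega, hk⟩, by ring⟩
    · rintro ⟨z, ⟨hz0, hzS⟩, rfl⟩
      refine ⟨?_, by omega⟩
      show f - (f - z) ∉ S
      simpa using hzS
  have hKIfin : (stdCanonical S ∩ Iic f).Finite := by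
    rw [hKI]; exact hfinS.image _
  have hKIcard : (stdCanonical S ∩ Iic f).ncard = genus S := by
    rw [hKI]
    exact Set.ncard_image_of_injective _ (fun a b h => by simpa using h)
  -- counting
  set A := T ∩ Icc m f with hAdef
  set B := Icc m f \ T with hBdef
  have hTm : ∀ x ∈ T, m ≤ x := by
    intro x hx; have := hmEle _ ((hTmem x).1 hx); omega
  have hAI : A = T ∩ Iic f := by
    ext x
    simp only [hAdef, mem_inter_iff, mem_Icc, mem_Iic]
    exact ⟨fun ⟨h1, _, h3⟩ => ⟨h1, h3⟩, fun ⟨h1, h2⟩ => ⟨h1, hTm x h1, h2⟩⟩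
  have hIccfin : (Icc m f : Set ℤ).Finite := Set.finite_Icc m f
  have hAfin : A.Finite := hIccfin.subset (by intro x hx; exact hx.2)
  have hBfin : B.Finite := hIccfin.subset (by intro x hx; exact hx.1)
  have hunion : A ∪ B = Icc m f := by
    ext x
    simp only [hAdef, hBdef, mem_union, mem_inter_iff, mem_diff]
    by_cases h : x ∈ T <;> tauto
  have hdisj : Disjoint A B := by
    rw [Set.disjoint_left]
    rintro x ⟨hx, _⟩ ⟨_, hnx⟩
    exact hnx hx
  have hcount : A.ncard + B.ncard = (f + 1 - m).toNat := by
    have h1 : (Icc m f : Set ℤ).ncard = (f + 1 - m).toNat := by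
      rw [← Finset.coe_Icc, Set.ncard_coe_finset, Int.card_Icc]
    rw [← h1, ← hunion, Set.ncard_union_eq hdisj hAfin hBfin]
  have hidg : idealGenus T = B.ncard := by
    unfold idealGenus
    congr 1
    ext x
    simp only [hBdef, mem_diff, mem_Icc, mem_setOf_eq, hmT, hfT]
    tauto
  -- A ⊆ K ∩ Iic f
  have hAK : A ⊆ stdCanonical S ∩ Iic f := by
    rw [hAI]
    exact fun x ⟨h1, h2⟩ => ⟨hTK h1, h2⟩
  have hAle : A.ncard ≤ genus S := by
    rw [← hKIcard]
    exact Set.ncard_le_ncard hAK hKIfin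
  -- key identity: gT + m = f + 1 - A.ncard
  have hkey : (idealGenus T : ℤ) + m = f + 1 - A.ncard := by
    rw [hidg]
    have := hcount
    have h2 : ((f + 1 - m).toNat : ℤ) = f + 1 - m := Int.toNat_of_nonneg (by omega)
    have h3 : (A.ncard : ℤ) + B.ncard = f + 1 - m := by
      rw [← h2]; exact_mod_cast this
    omega
  rw [hmT] at *
  constructor
  · rw [hkey]
    have : (A.ncard : ℤ) ≤ genus S := by exact_mod_cast hAle
    omega
  · constructor
    · intro heq
      rw [hkey] at heq
      have hAg : A.ncard = genus S := by omega
      have hAeq : A = stdCanonical S ∩ Iic f := by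
        apply Set.eq_of_subset_of_ncard_le hAK _ hKIfin
        rw [hAg, hKIcard]
      ext x
      constructor
      · exact fun h => hTK h
      · intro hx
        rcases le_or_gt x f with h | h
        · have : x ∈ A := hAeq ▸ ⟨hx, h⟩
          rw [hAI] at this; exact this.1
        · exact hgtT x h
    · intro hTeqK
      rw [hkey]
      have : A = stdCanonical S ∩ Iic f := by rw [hAI, hTeqK]
      rw [this, hKIcard]
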